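/- Fix y ∈ (0,1) and σ² > 0, and let h : ℝ → (0,1) be a mean-predictor inverse-link map and η₀ ∈ ℝ a point such that h is twice differentiable at η₀. Write μ = h(η₀), and suppose g is a link function that is twice differentiable at μ with g′(μ) ≠ 0 and h′(η₀) = 1/g′(μ), h″(η₀) = −g″(μ)/g′(μ)³ (i.e. h is locally inverse to g). Then the second derivative of the composite map η ↦ ℓ(h(η),σ²;y) at η₀ equals −(1/σ²)·q, where q = { u(y,μ) − (y−μ)·u′(y,μ) + (y−μ)·u(y,μ)·g″(μ)/g′(μ) } / g′(μ)², and u′(y,μ) = −{ 2(y−μ)u(y,μ)/(μ(1−μ)) + 3(1−2μ)/(μ⁴(1−μ)⁴) + (1−2μ)d(y;μ)/(μ²(1−μ)²) }. -/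

import Mathlib

open Real

/-- The unit deviance of the simplex distribution. -/
noncomputable def simplexDev (y μ : ℝ) : ℝ :=
  (y - μ)^2 / (y * (1 - y) * μ^2 * (1 - μ)^2)

/-- The simplex log-likelihood for a single observation. -/
noncomputable def simplexLoglik (μ σ2 y : ℝ) : ℝ :=
  -(1/2) * Real.log (2 * Real.pi) - (1/2) * Real.log σ2
    - (3/2) * Real.log (y * (1 - y)) - simplexDev y μ / (2 * σ2)

/-- The quantity u(y,μ). -/
noncomputable def simplexU (y μ : ℝ) : ℝ :=
  (1 / (μ * (1 - μ))) * (simplexDev y μ + 1 / (μ^2 * (1 - μ)^2))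

/-- The derivative u′(y,μ) of μ ↦ u(y,μ). -/
noncomputable def simplexU' (y μ : ℝ) : ℝ :=
  -(2 * (y - μ) * simplexU y μ / (μ * (1 - μ))
      + 3 * (1 - 2*μ) / (μ^4 * (1 - μ)^4)
      + (1 - 2*μ) * simplexDev y μ / (μ^2 * (1 - μ)^2))

lemma simplexDev_hasDerivAt (y t : ℝ) (hy : y ∈ Set.Ioo (0:ℝ) 1) (ht : t ∈ Set.Ioo (0:ℝ) 1) :
    HasDerivAt (fun s => simplexDev y s) (-2 * (y - t) * simplexU y t) t := by
  obtain ⟨hy0, hy1⟩ := hy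
  obtain ⟨ht0, ht1⟩ := ht
  have hy0' : y ≠ 0 := ne_of_gt hy0
  have hy1' : (1:ℝ) - y ≠ 0 := by linarith
  have ht0' : t ≠ 0 := ne_of_gt ht0
  have ht1' : (1:ℝ) - t ≠ 0 := by linarith
  have hnum : HasDerivAt (fun s : ℝ => (y - s)^2) (-(2 * (y - t))) t := by
    have := ((hasDerivAt_id t).const_sub y).pow 2
    convert this using 1
    · rfl
    · rfl
    · rfl
    simp [id]
  have hden : HasDerivAt (fun s : ℝ => y * (1 - y) * s^2 * (1 - s)^2)
      (y * (1 - y) * (2 * t) * (1 - t)^2 - y * (1 - y) * t^2 * (2 * (1 - t))) t := by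
    have := ((hasDerivAt_pow 2 t).const_mul (y * (1 - y))).mul
      (((hasDerivAt_id t).const_sub 1).pow 2)
    convert this using 1
    · rfl
    · rfl
    · rfl
    simp [id]
    ring
  have hden_ne : y * (1 - y) * t^2 * (1 - t)^2 ≠ 0 := by
    have h3 : (0:ℝ) < 1 - y := by linarith
    have h4 : (0:ℝ) < 1 - t := by linarith
    exact ne_of_gt (mul_pos (mul_pos (mul_pos hy0 h3) (pow_pos ht0 2)) (pow_pos h4 2))
  have hdiv := hnum.div hden hden_ne
  have hfun : (fun s => simplexDev y s)
      = fun s : ℝ => (y - s)^2 / (y * (1 - y) * s^2 * (1 - s)^2) := by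
    funext s; rfl
  rw [hfun]
  convert hdiv using 1
  · rfl
  · rfl
  · rfl
  unfold simplexU simplexDev
  field_simp
  ring

lemma simplexU_hasDerivAt (y t : ℝ) (hy : y ∈ Set.Ioo (0:ℝ) 1) (ht : t ∈ Set.Ioo (0:ℝ) 1) :
    HasDerivAt (fun s => simplexU y s) (simplexU' y t) t := by
  obtain ⟨hy0, hy1⟩ := hy
  obtain ⟨ht0, ht1⟩ := ht
  have hy0' : y ≠ 0 := ne_of_gt hy0
  have hy1' : (1:ℝ) - y ≠ 0 := by linarith
  have ht0' : t ≠ 0 := ne_of_gt ht0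
  have ht1' : (1:ℝ) - t ≠ 0 := by linarith
  have hnum : HasDerivAt (fun s : ℝ => (y - s)^2 + y * (1 - y)) (-(2 * (y - t))) t := by
    have := (((hasDerivAt_id t).const_sub y).pow 2).add (hasDerivAt_const t (y * (1 - y)))
    convert this using 1
    · rfl
    · rfl
    · rfl
    simp [id]
  have hden : HasDerivAt (fun s : ℝ => y * (1 - y) * s^3 * (1 - s)^3)
      (y * (1 - y) * (3 * t^2) * (1 - t)^3 - y * (1 - y) * t^3 * (3 * (1 - t)^2)) t := by
    have := ((hasDerivAt_pow 3 t).const_mul (y * (1 - y))).mul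
      (((hasDerivAt_id t).const_sub 1).pow 3)
    convert this using 1
    · rfl
    · rfl
    · rfl
    simp [id]
    ring
  have hden_ne : y * (1 - y) * t^3 * (1 - t)^3 ≠ 0 := by
    have h3 : (0:ℝ) < 1 - y := by linarith
    have h4 : (0:ℝ) < 1 - t := by linarith
    exact ne_of_gt (mul_pos (mul_pos (mul_pos hy0 h3) (pow_pos ht0 3)) (pow_pos h4 3))
  have hF := hnum.div hden hden_ne
  have heq : (fun s : ℝ => ((y - s)^2 + y * (1 - y)) / (y * (1 - y) * s^3 * (1 - s)^3))
      =ᶠ[nhds t] (fun s => simplexU y s) := by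
    filter_upwards [isOpen_Ioo.mem_nhds (show t ∈ Set.Ioo (0:ℝ) 1 from ⟨ht0, ht1⟩)] with s hs
    obtain ⟨hs0, hs1⟩ := hs
    have hs0' : s ≠ 0 := ne_of_gt hs0
    have hs1' : (1:ℝ) - s ≠ 0 := by linarith
    unfold simplexU simplexDev
    field_simp
  have hU := hF.congr_of_eventuallyEq heq.symm
  convert hU using 1
  · rfl
  · rfl
  unfold simplexU' simplexU simplexDev
  field_simp
  ring

/-- The second derivative of the composite map η ↦ ℓ(h(η),σ²;y) at η₀ equals
−(1/σ²)·q with q the per-observation entry of the matrix Q in the Hessian block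
ℓ̈_ββ of the nonlinear simplex regression model. -/
theorem simplexLoglik_comp_iteratedDeriv_two (y σ2 : ℝ)
    (hy : y ∈ Set.Ioo (0:ℝ) 1) (hσ2 : 0 < σ2)
    (h g : ℝ → ℝ) (η₀ : ℝ) (hmaps : ∀ x, h x ∈ Set.Ioo (0:ℝ) 1)
    (hh : ContDiffAt ℝ 2 h η₀)
    (μ : ℝ) (hμeq : μ = h η₀)
    (hg : ContDiffAt ℝ 2 g μ)
    (hg' : deriv g μ ≠ 0)
    (hinv1 : deriv h η₀ = 1 / deriv g μ)
    (hinv2 : deriv (deriv h) η₀ = -(deriv (deriv g) μ) / (deriv g μ)^3) :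
    iteratedDeriv 2 (fun η => simplexLoglik (h η) σ2 y) η₀ =
      -(1 / σ2) *
        ((simplexU y μ - (y - μ) * simplexU' y μ
            + (y - μ) * simplexU y μ * deriv (deriv g) μ / deriv g μ)
          / (deriv g μ)^2) := by
  subst hμeq
  obtain ⟨hy0, hy1⟩ := hy
  have hσ2' : σ2 ≠ 0 := ne_of_gt hσ2
  have hev : ∀ᶠ η in nhds η₀, ContDiffAt ℝ 2 h η := hh.eventually (by norm_num)
  set G : ℝ → ℝ := fun η => 1 / σ2 * ((y - h η) * simplexU y (h η) * deriv h η) with hGdef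
  have hG : deriv (fun η => simplexLoglik (h η) σ2 y) =ᶠ[nhds η₀] G := by
    filter_upwards [hev] with η hη
    have hdh : HasDerivAt h (deriv h η) η :=
      (hη.differentiableAt (by norm_num)).hasDerivAt
    have hdev : HasDerivAt (fun x => simplexDev y (h x))
        (-2 * (y - h η) * simplexU y (h η) * deriv h η) η := by
      have := (simplexDev_hasDerivAt y (h η) ⟨hy0, hy1⟩ (hmaps η)).comp η hdh
      simpa [Function.comp_def, mul_assoc] using this
    have hf : HasDerivAt (fun x => simplexLoglik (h x) σ2 y)
        (-((-2 * (y - h η) * simplexU y (h η) * deriv h η) / (2 * σ2))) η :=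
      (hdev.div_const (2 * σ2)).const_sub
        (-(1/2) * Real.log (2 * Real.pi) - (1/2) * Real.log σ2
          - (3/2) * Real.log (y * (1 - y)))
    rw [hf.deriv, hGdef]
    field_simp
  rw [show (2:ℕ) = 1 + 1 from rfl, iteratedDeriv_succ, iteratedDeriv_one, hG.deriv_eq]
  obtain ⟨u, hu_mem, hu_cd⟩ := hh.contDiffOn le_rfl (by norm_num)
  obtain ⟨v, hvu, hv_open, hv_mem⟩ := mem_nhds_iff.mp hu_mem
  have hcd' : ContDiffOn ℝ 1 (deriv h) v :=
    (hu_cd.mono hvu).deriv_of_isOpen hv_open (by norm_num)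
  have hdd : HasDerivAt (deriv h) (deriv (deriv h) η₀) η₀ :=
    ((hcd'.differentiableOn (by norm_num)).differentiableAt
      (hv_open.mem_nhds hv_mem)).hasDerivAt
  have hdh0 : HasDerivAt h (deriv h η₀) η₀ :=
    (hh.differentiableAt (by norm_num)).hasDerivAt
  have hu0 : HasDerivAt (fun η => simplexU y (h η))
      (simplexU' y (h η₀) * deriv h η₀) η₀ := by
    have := (simplexU_hasDerivAt y (h η₀) ⟨hy0, hy1⟩ (hmaps η₀)).comp η₀ hdh0
    simpa [Function.comp_def] using this
  have hym : HasDerivAt (fun η => y - h η) (-(deriv h η₀)) η₀ := by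
    simpa using hdh0.const_sub y
  have hprod : HasDerivAt G
      (1 / σ2 * (((-(deriv h η₀)) * simplexU y (h η₀)
          + (y - h η₀) * (simplexU' y (h η₀) * deriv h η₀)) * deriv h η₀
        + (y - h η₀) * simplexU y (h η₀) * deriv (deriv h) η₀)) η₀ :=
    ((hym.mul hu0).mul hdd).const_mul (1 / σ2)
  rw [hprod.deriv, hinv1, hinv2]
  field_simp
  ring
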